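/- Let R be a Γ-graded von Neumann regular graded right self-injective ring and e a homogeneous idempotent of R. The following are equivalent: (a) e is graded faithful; (b) the two-sided ideal ReR is graded essential as a right ideal of R; (c) for every nonzero homogeneous x ∈ R one has xRe ≠ 0 (Re is a graded faithful left ideal); (d) for every nonzero homogeneous x ∈ R one has eRx ≠ 0 (eR is a graded faithful right ideal); (e) for every nonzero graded right ideal J of R there exist γ ∈ Γ and a nonzero right R-module homomorphism f : eR → J with f(eR ∩ R_δ) ⊆ J ∩ R_{δ+γ} for all δ ∈ Γ. -/

import Mathlib

/- Setting: `Γ = ι` an additive abelian group, `R` a `ι`-graded ring with identity,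
with homogeneous components the additive subgroups `𝒜 γ`. -/

variable {ι R : Type*}

section Defs
variable [DecidableEq ι] [AddCommGroup ι] [Ring R] (𝒜 : ι → AddSubgroup R) [GradedRing 𝒜]

/-- An element of `R` is homogeneous if it lies in some component `𝒜 γ`. -/
def IsHomog (a : R) : Prop := ∃ γ : ι, a ∈ 𝒜 γ

/-- `R` is graded von Neumann regular: every homogeneous element has an inner inverse. -/
def GradedVNRegular : Prop := ∀ a : R, IsHomog 𝒜 a → ∃ b : R, a * b * a = a

/-- A subset of `R` is a right ideal. -/
def IsRightIdealSet (I : Set R) : Prop :=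
  (0 : R) ∈ I ∧ (∀ x ∈ I, ∀ y ∈ I, x + y ∈ I) ∧ ∀ x ∈ I, ∀ r : R, x * r ∈ I

/-- A graded right ideal: a right ideal containing all homogeneous components of
its elements. -/
def IsGradedRightIdeal (I : Set R) : Prop :=
  IsRightIdealSet I ∧ ∀ x ∈ I, ∀ γ : ι, ((DirectSum.decompose 𝒜 x γ : 𝒜 γ) : R) ∈ I

/-- `A` is graded essential in `B` (as graded right ideals): `A ⊆ B` and every nonzero
graded right ideal contained in `B` meets `A` nontrivially. -/
def GradedEssentialIn (A B : Set R) : Prop :=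
  A ⊆ B ∧ ∀ J : Set R, IsGradedRightIdeal 𝒜 J → J ⊆ B → (∃ x ∈ J, x ≠ 0) →
    ∃ x, x ∈ A ∩ J ∧ x ≠ 0

/-- Graded Baer criterion: `R` is graded right self-injective. A homomorphism from a
graded right ideal `I` to `R` is encoded as a function `f : R → R` which is additive on
`I`, right `R`-linear on `I`, and of degree `γ` on `I`. -/
def GradedSelfInjective : Prop :=
  ∀ I : Set R, IsGradedRightIdeal 𝒜 I → ∀ γ : ι, ∀ f : R → R,
    (∀ x ∈ I, ∀ y ∈ I, f (x + y) = f x + f y) →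
    (∀ x ∈ I, ∀ r : R, f (x * r) = f x * r) →
    (∀ δ : ι, ∀ x ∈ I, x ∈ 𝒜 δ → f x ∈ 𝒜 (γ + δ)) →
    ∃ c ∈ 𝒜 γ, ∀ x ∈ I, f x = c * x

/-- A homogeneous idempotent of `R`. -/
def IsHomogIdem (e : R) : Prop := IsHomog 𝒜 e ∧ e * e = e

/-- A graded abelian idempotent: every homogeneous idempotent of the corner ring `eRe`
is central in `eRe` (membership `f ∈ eRe` is expressed as `e * f * e = f`). -/
def GrAbelianIdem (e : R) : Prop :=
  IsHomogIdem 𝒜 e ∧ ∀ f : R, IsHomog 𝒜 f → e * f * e = f → f * f = f →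
    ∀ x : R, e * x * e = x → f * x = x * f

/-- A graded directly finite idempotent: for homogeneous `x, y ∈ eRe`,
`x * y = e` implies `y * x = e`. -/
def GrDirFinIdem (e : R) : Prop :=
  IsHomogIdem 𝒜 e ∧ ∀ x y : R, IsHomog 𝒜 x → IsHomog 𝒜 y →
    e * x * e = x → e * y * e = y → x * y = e → y * x = e

/-- A graded faithful idempotent: the only central homogeneous idempotent `y`
with `e * y = 0` is `y = 0`. -/
def GrFaithfulIdem (e : R) : Prop :=
  IsHomogIdem 𝒜 e ∧ ∀ y : R, IsHomog 𝒜 y → y * y = y → (∀ r : R, y * r = r * y) →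
    e * y = 0 → y = 0

end Defs

section Helpers
variable [DecidableEq ι] [AddCommGroup ι] [Ring R] (𝒜 : ι → AddSubgroup R) [GradedRing 𝒜]

open DirectSum

def decompHom (γ : ι) : R →+ R where
  toFun x := ((decompose 𝒜 x γ : 𝒜 γ) : R)
  map_zero' := by simp
  map_add' x y := by simp [decompose_add]

lemma decompHom_apply (γ : ι) (x : R) :
    decompHom 𝒜 γ x = ((decompose 𝒜 x γ : 𝒜 γ) : R) := rfl

lemma aux_decomp_mul_left {i : ι} {a : R} (ha : a ∈ 𝒜 i) (b : R) (j : ι) :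
    ((decompose 𝒜 (a * b) (i + j) : 𝒜 (i + j)) : R) = a * ((decompose 𝒜 b j : 𝒜 j) : R) := by
  lift a to 𝒜 i using ha
  rw [decompose_mul, decompose_coe, coe_of_mul_apply_add]

lemma aux_decomp_mul_right {i : ι} {b : R} (hb : b ∈ 𝒜 i) (a : R) (j : ι) :
    ((decompose 𝒜 (a * b) (j + i) : 𝒜 (j + i)) : R) = ((decompose 𝒜 a j : 𝒜 j) : R) * b := by
  lift b to 𝒜 i using hb
  rw [decompose_mul, decompose_coe, coe_mul_of_apply_add]

lemma aux_decomp_mul_zero_left {a : R} (ha : a ∈ 𝒜 0) (b : R) (j : ι) :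
    ((decompose 𝒜 (a * b) j : 𝒜 j) : R) = a * ((decompose 𝒜 b j : 𝒜 j) : R) := by
  have h := aux_decomp_mul_left 𝒜 ha b j
  rwa [zero_add] at h

lemma aux_eq_zero {x : R} (h : ∀ γ : ι, ((decompose 𝒜 x γ : 𝒜 γ) : R) = 0) : x = 0 := by
  classical
  rw [← DirectSum.sum_support_decompose 𝒜 x]
  exact Finset.sum_eq_zero fun γ _ => h γ

lemma aux_mid (u v r : R) (h : ∀ γ : ι, u * ((decompose 𝒜 r γ : 𝒜 γ) : R) * v = 0) :
    u * r * v = 0 := by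
  classical
  conv_lhs => rw [← DirectSum.sum_support_decompose 𝒜 r]
  rw [Finset.mul_sum, Finset.sum_mul]
  exact Finset.sum_eq_zero fun γ _ => h γ

lemma aux_mid' {u v r : R} (h : u * r * v ≠ 0) :
    ∃ γ : ι, u * ((decompose 𝒜 r γ : 𝒜 γ) : R) * v ≠ 0 := by
  by_contra hc
  push_neg at hc
  exact h (aux_mid 𝒜 u v r hc)

lemma aux_semiprime (hreg : GradedVNRegular 𝒜) {a : R} (ha : IsHomog 𝒜 a)
    (h : ∀ r : R, a * r * a = 0) : a = 0 := by
  obtain ⟨b, hb⟩ := hreg a ha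
  calc a = a * b * a := hb.symm
  _ = 0 := h b

lemma aux_idem_deg0 {e : R} (he : IsHomogIdem 𝒜 e) (hne : e ≠ 0) : e ∈ 𝒜 0 := by
  obtain ⟨⟨γ, hγ⟩, hee⟩ := he
  by_cases h : γ = 0
  · exact h ▸ hγ
  exfalso
  apply hne
  have h2 : e ∈ 𝒜 (γ + γ) := hee ▸ SetLike.mul_mem_graded hγ hγ
  have hne2 : γ + γ ≠ γ := fun hc => h (by
    have := add_right_cancel (hc.trans (zero_add γ).symm); exact this)
  have h3 := DirectSum.decompose_of_mem_ne 𝒜 h2 hne2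
  have h4 := DirectSum.decompose_of_mem_same 𝒜 hγ
  rw [h3] at h4
  exact h4.symm

lemma aux_inner (hreg : GradedVNRegular 𝒜) {γ : ι} {a : R} (ha : a ∈ 𝒜 γ) :
    ∃ b : R, b ∈ 𝒜 (-γ) ∧ a * b * a = a := by
  obtain ⟨b, hb⟩ := hreg a ⟨γ, ha⟩
  refine ⟨((decompose 𝒜 b (-γ) : 𝒜 (-γ)) : R), SetLike.coe_mem _, ?_⟩
  have h1 := aux_decomp_mul_right 𝒜 ha b (-γ)
  have h2 := aux_decomp_mul_left 𝒜 ha (b * a) (-γ + γ)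
  rw [h1] at h2
  have h3 : a * (b * a) = a := by rw [← mul_assoc]; exact hb
  rw [h3] at h2
  rw [show γ + (-γ + γ) = γ by abel] at h2
  rw [DirectSum.decompose_of_mem_same 𝒜 ha] at h2
  rw [← mul_assoc] at h2
  exact h2.symm

end Helpers

section Main
variable [DecidableEq ι] [AddCommGroup ι] [Ring R] (𝒜 : ι → AddSubgroup R) [GradedRing 𝒜]
open DirectSum

lemma key14 (hreg : GradedVNRegular 𝒜) (hinj : GradedSelfInjective 𝒜)
    {e : R} (hf : GrFaithfulIdem 𝒜 e) :
    ∀ x : R, IsHomog 𝒜 x → x ≠ 0 → ∃ r : R, e * r * x ≠ 0 := by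
  classical
  intro x hx hxne
  by_contra hcon
  push_neg at hcon
  -- degenerate case e = 0
  by_cases he0 : e = 0
  · have h1 : (1 : R) = 0 := hf.2 1 ⟨0, SetLike.one_mem_graded _⟩ (one_mul 1)
      (fun r => by rw [one_mul, mul_one]) (by rw [he0, zero_mul])
    exact hxne (by rw [← mul_one x, h1, mul_zero])
  have he : IsHomogIdem 𝒜 e := hf.1
  have hee : e * e = e := he.2
  have he00 : e ∈ 𝒜 0 := aux_idem_deg0 𝒜 he he0
  -- the two ideals
  set A : Set R := {a : R | ∀ r : R, e * r * a = 0} with hAdef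
  set B : AddSubgroup R := AddSubgroup.closure {u : R | ∃ r s : R, u = r * e * s} with hBdef
  have hmemA : ∀ a : R, a ∈ A ↔ ∀ r : R, e * r * a = 0 := fun a => Iff.rfl
  -- A is closed under various operations
  have hA0 : (0 : R) ∈ A := fun r => by rw [mul_zero]
  have hAadd : ∀ a ∈ A, ∀ a' ∈ A, a + a' ∈ A := fun a ha a' ha' r => by
    rw [mul_add, ha r, ha' r, add_zero]
  have hAsub : ∀ a ∈ A, ∀ a' ∈ A, a - a' ∈ A := fun a ha a' ha' r => by
    rw [mul_sub, ha r, ha' r, sub_zero]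
  have hAr : ∀ a ∈ A, ∀ s : R, a * s ∈ A := fun a ha s r => by
    rw [← mul_assoc, ha r, zero_mul]
  have hAl : ∀ a ∈ A, ∀ s : R, s * a ∈ A := fun a ha s r => by
    have h1 : e * r * (s * a) = e * (r * s) * a := by noncomm_ring
    rw [h1, ha (r * s)]
  have hAgr : ∀ a ∈ A, ∀ γ : ι, ((decompose 𝒜 a γ : 𝒜 γ) : R) ∈ A := by
    intro a ha γ r
    apply aux_mid 𝒜
    intro δ
    set rδ : R := ((decompose 𝒜 r δ : 𝒜 δ) : R) with hrδ
    have hrδm : rδ ∈ 𝒜 δ := SetLike.coe_mem _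
    have h1 : ((decompose 𝒜 (rδ * a) (δ + γ) : 𝒜 (δ + γ)) : R)
        = rδ * ((decompose 𝒜 a γ : 𝒜 γ) : R) := aux_decomp_mul_left 𝒜 hrδm a γ
    have h2 : ((decompose 𝒜 (e * (rδ * a)) (δ + γ) : 𝒜 (δ + γ)) : R)
        = e * ((decompose 𝒜 (rδ * a) (δ + γ) : 𝒜 (δ + γ)) : R) :=
      aux_decomp_mul_zero_left 𝒜 he00 (rδ * a) (δ + γ)
    have h3 : e * (rδ * a) = 0 := by rw [← mul_assoc]; exact ha rδ
    rw [h1, h3] at h2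
    rw [← mul_assoc] at h2
    rw [← h2]
    simp
  -- B facts
  have hBgen : ∀ r s : R, r * e * s ∈ B := fun r s =>
    AddSubgroup.subset_closure ⟨r, s, rfl⟩
  have hBr : ∀ b ∈ B, ∀ t : R, b * t ∈ B := by
    intro b hb
    induction hb using AddSubgroup.closure_induction with
    | mem u hu => obtain ⟨r, s, rfl⟩ := hu; intro t
                  have h1 : r * e * s * t = r * e * (s * t) := by noncomm_ring
                  rw [h1]; exact hBgen r (s * t)
    | zero => intro t; rw [zero_mul]; exact zero_mem _
    | add u v _ _ hu hv => intro t; rw [add_mul]; exact add_mem (hu t) (hv t)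
    | neg u _ hu => intro t; rw [neg_mul]; exact neg_mem (hu t)
  have hBl : ∀ b ∈ B, ∀ t : R, t * b ∈ B := by
    intro b hb
    induction hb using AddSubgroup.closure_induction with
    | mem u hu => obtain ⟨r, s, rfl⟩ := hu; intro t
                  have h1 : t * (r * e * s) = (t * r) * e * s := by noncomm_ring
                  rw [h1]; exact hBgen (t * r) s
    | zero => intro t; rw [mul_zero]; exact zero_mem _
    | add u v _ _ hu hv => intro t; rw [mul_add]; exact add_mem (hu t) (hv t)
    | neg u _ hu => intro t; rw [mul_neg]; exact neg_mem (hu t)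
  have hBA : ∀ b ∈ B, ∀ a ∈ A, b * a = 0 := by
    intro b hb
    induction hb using AddSubgroup.closure_induction with
    | mem u hu => obtain ⟨r, s, rfl⟩ := hu; intro a ha
                  have h1 : r * e * s * a = r * (e * s * a) := by noncomm_ring
                  rw [h1, ha s, mul_zero]
    | zero => intro a _; rw [zero_mul]
    | add u v _ _ hu hv => intro a ha; rw [add_mul, hu a ha, hv a ha, add_zero]
    | neg u _ hu => intro a ha; rw [neg_mul, hu a ha, neg_zero]
  have hBgr : ∀ b ∈ B, ∀ γ : ι, ((decompose 𝒜 b γ : 𝒜 γ) : R) ∈ B := by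
    have claim1 : ∀ (α β : ι) (rh sh : R), rh ∈ 𝒜 α → sh ∈ 𝒜 β → ∀ γ : ι,
        ((decompose 𝒜 (rh * e * sh) γ : 𝒜 γ) : R) ∈ B := by
      intro α β rh sh hrh hsh γ
      have hmem : rh * e * sh ∈ 𝒜 (α + 0 + β) :=
        SetLike.mul_mem_graded (SetLike.mul_mem_graded hrh he00) hsh
      by_cases hγ : α + 0 + β = γ
      · rw [← hγ, DirectSum.decompose_of_mem_same 𝒜 hmem]
        exact hBgen rh sh
      · rw [DirectSum.decompose_of_mem_ne 𝒜 hmem hγ]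
        exact zero_mem _
    intro b hb
    induction hb using AddSubgroup.closure_induction with
    | mem u hu =>
        obtain ⟨r, s, rfl⟩ := hu
        intro γ
        have h1 : r * e * s = ∑ α ∈ (decompose 𝒜 r).support,
            ∑ β ∈ (decompose 𝒜 s).support,
              (((decompose 𝒜 r α : 𝒜 α) : R) * e * ((decompose 𝒜 s β : 𝒜 β) : R)) := by
          conv_lhs => rw [← DirectSum.sum_support_decompose 𝒜 r,
            ← DirectSum.sum_support_decompose 𝒜 s]
          rw [Finset.sum_mul, Finset.sum_mul]
          exact Finset.sum_congr rfl fun α _ => by rw [Finset.mul_sum]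
        rw [h1]
        rw [show ((decompose 𝒜 (∑ α ∈ (decompose 𝒜 r).support,
            ∑ β ∈ (decompose 𝒜 s).support,
              (((decompose 𝒜 r α : 𝒜 α) : R) * e * ((decompose 𝒜 s β : 𝒜 β) : R))) γ : 𝒜 γ) : R)
          = decompHom 𝒜 γ _ from rfl]
        rw [map_sum]
        apply sum_mem
        intro α _
        rw [map_sum]
        apply sum_mem
        intro β _
        exact claim1 α β _ _ (SetLike.coe_mem _) (SetLike.coe_mem _) γ
    | zero => intro γ
              rw [show ((decompose 𝒜 (0 : R) γ : 𝒜 γ) : R) = decompHom 𝒜 γ 0 from rfl, map_zero]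
              exact zero_mem _
    | add u v _ _ hu hv => intro γ
                           rw [show ((decompose 𝒜 (u + v) γ : 𝒜 γ) : R)
                             = decompHom 𝒜 γ (u + v) from rfl, map_add]
                           exact add_mem (hu γ) (hv γ)
    | neg u _ hu => intro γ
                    rw [show ((decompose 𝒜 (-u) γ : 𝒜 γ) : R)
                      = decompHom 𝒜 γ (-u) from rfl, map_neg]
                    exact neg_mem (hu γ)
  -- A ∩ B = 0
  have hAB0 : ∀ z : R, z ∈ A → z ∈ B → z = 0 := by
    intro z hzA hzB
    apply aux_eq_zero 𝒜
    intro γ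
    have h1 : ((decompose 𝒜 z γ : 𝒜 γ) : R) ∈ A := hAgr z hzA γ
    have h2 : ((decompose 𝒜 z γ : 𝒜 γ) : R) ∈ B := hBgr z hzB γ
    apply aux_semiprime 𝒜 hreg ⟨γ, SetLike.coe_mem _⟩
    intro r
    exact hBA _ (hBr _ h2 r) _ h1
  -- the graded right ideal I = A ⊕ B
  set I : Set R := {u : R | ∃ a, a ∈ A ∧ ∃ b, b ∈ B ∧ u = a + b} with hIdef
  have hIA : ∀ a ∈ A, a ∈ I := fun a ha => ⟨a, ha, 0, zero_mem _, (add_zero a).symm⟩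
  have hIB : ∀ b ∈ B, b ∈ I := fun b hb => ⟨0, hA0, b, hb, (zero_add b).symm⟩
  have hIgraded : IsGradedRightIdeal 𝒜 I := by
    refine ⟨⟨hIA 0 hA0, ?_, ?_⟩, ?_⟩
    · rintro u ⟨a, ha, b, hb, rfl⟩ v ⟨a', ha', b', hb', rfl⟩
      exact ⟨a + a', hAadd a ha a' ha', b + b', add_mem hb hb', by abel⟩
    · rintro u ⟨a, ha, b, hb, rfl⟩ r
      exact ⟨a * r, hAr a ha r, b * r, hBr b hb r, (add_mul a b r)⟩
    · rintro u ⟨a, ha, b, hb, rfl⟩ γ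
      refine ⟨((decompose 𝒜 a γ : 𝒜 γ) : R), hAgr a ha γ,
        ((decompose 𝒜 b γ : 𝒜 γ) : R), hBgr b hb γ, ?_⟩
      rw [show ((decompose 𝒜 (a + b) γ : 𝒜 γ) : R) = decompHom 𝒜 γ (a + b) from rfl, map_add]
      rfl
  -- uniqueness of decomposition
  have huniq : ∀ a ∈ A, ∀ b ∈ B, ∀ a' ∈ A, ∀ b' ∈ B, a + b = a' + b' → a = a' := by
    intro a ha b hb a' ha' b' hb' heq
    have h1 : a - a' = b' - b := by
      rw [sub_eq_sub_iff_add_eq_add, heq]; exact add_comm a' b'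
    have h2 : a - a' ∈ A := hAsub a ha a' ha'
    have h3 : a - a' ∈ B := h1 ▸ sub_mem hb' hb
    have := hAB0 _ h2 h3
    exact sub_eq_zero.mp this
  -- the homomorphism f
  set f : R → R := fun u => if h : u ∈ I then h.choose else 0 with hfdef
  have hfval : ∀ a ∈ A, ∀ b ∈ B, f (a + b) = a := by
    intro a ha b hb
    have hmem : (a + b) ∈ I := ⟨a, ha, b, hb, rfl⟩
    have : f (a + b) = hmem.choose := dif_pos hmem
    rw [this]
    obtain ⟨ha', b', hb', heq⟩ := hmem.choose_spec
    exact (huniq _ ha' _ hb' _ ha _ hb heq.symm)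
  -- apply injectivity
  have hadd : ∀ u ∈ I, ∀ v ∈ I, f (u + v) = f u + f v := by
    rintro u ⟨a, ha, b, hb, rfl⟩ v ⟨a', ha', b', hb', rfl⟩
    rw [show a + b + (a' + b') = (a + a') + (b + b') by abel,
      hfval _ (hAadd a ha a' ha') _ (add_mem hb hb'), hfval a ha b hb, hfval a' ha' b' hb']
  have hlin : ∀ u ∈ I, ∀ r : R, f (u * r) = f u * r := by
    rintro u ⟨a, ha, b, hb, rfl⟩ r
    rw [add_mul, hfval _ (hAr a ha r) _ (hBr b hb r), hfval a ha b hb]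
  have hdeg : ∀ δ : ι, ∀ u ∈ I, u ∈ 𝒜 δ → f u ∈ 𝒜 (0 + δ) := by
    rintro δ u ⟨a, ha, b, hb, rfl⟩ hu
    rw [zero_add, hfval a ha b hb]
    have h1 : ((decompose 𝒜 (a + b) δ : 𝒜 δ) : R) = a + b :=
      DirectSum.decompose_of_mem_same 𝒜 hu
    have h2 : ((decompose 𝒜 (a + b) δ : 𝒜 δ) : R)
        = ((decompose 𝒜 a δ : 𝒜 δ) : R) + ((decompose 𝒜 b δ : 𝒜 δ) : R) := by
      rw [show ((decompose 𝒜 (a + b) δ : 𝒜 δ) : R) = decompHom 𝒜 δ (a + b) from rfl, map_add]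
      rfl
    have heq : a + b = ((decompose 𝒜 a δ : 𝒜 δ) : R) + ((decompose 𝒜 b δ : 𝒜 δ) : R) := by
      rw [← h2, h1]
    have := huniq a ha b hb _ (hAgr a ha δ) _ (hBgr b hb δ) heq
    rw [this]
    exact SetLike.coe_mem _
  obtain ⟨c, hc0, hcval⟩ := hinj I hIgraded 0 f hadd hlin hdeg
  have hca : ∀ a ∈ A, c * a = a := by
    intro a ha
    have h1 := hcval (a + 0) (⟨a, ha, 0, zero_mem _, rfl⟩)
    rw [hfval a ha 0 (zero_mem _)] at h1
    rw [add_zero] at h1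
    exact h1.symm
  have hcb : ∀ b ∈ B, c * b = 0 := by
    intro b hb
    have h1 := hcval (0 + b) (⟨0, hA0, b, hb, rfl⟩)
    rw [hfval 0 hA0 b hb] at h1
    rw [zero_add] at h1
    exact h1.symm
  -- annihilator of I lemma
  have hann : ∀ z : R, IsHomog 𝒜 z → (∀ u ∈ I, z * u = 0) → z = 0 := by
    rintro z ⟨δ, hzδ⟩ hz
    by_contra hzne
    obtain ⟨w, hw, hww⟩ := aux_inner 𝒜 hreg hzδ
    set g : R := w * z with hgdef
    have hg0 : g ∈ 𝒜 0 := by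
      have h := SetLike.mul_mem_graded hw hzδ
      rwa [neg_add_cancel] at h
    have hzg : z * g = z := by rw [hgdef, ← mul_assoc]; exact hww
    have hgne : g ≠ 0 := fun h => hzne (by rw [← hzg, h, mul_zero])
    have hgg : g * g = g := by
      rw [hgdef, show w * z * (w * z) = w * (z * w * z) by noncomm_ring, hww]
    -- Step A : g*t ∈ I → g*t = 0
    have stepA : ∀ t : R, g * t ∈ I → g * t = 0 := by
      intro t ht
      have h1 : g * (g * t) = g * t := by rw [← mul_assoc, hgg]
      have h2 : z * (g * t) = 0 := hz _ ht
      calc g * t = g * (g * t) := h1.symm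
        _ = w * (z * (g * t)) := by rw [hgdef, mul_assoc]
        _ = 0 := by rw [h2, mul_zero]
    -- g * r * e = 0 for all r
    have hgre : ∀ r : R, g * r * e = 0 := by
      intro r
      have h1 : g * (r * e) ∈ I := hIB _ (by
        have : g * (r * e) = (g * r) * e * 1 := by noncomm_ring
        rw [this]; exact hBgen (g * r) 1)
      have := stepA (r * e) h1
      rwa [← mul_assoc] at this
    -- g ∈ A
    have hgA : g ∈ A := by
      intro r
      apply aux_mid 𝒜
      intro γ
      set rγ : R := ((decompose 𝒜 r γ : 𝒜 γ) : R) with hrγ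
      have hv : IsHomog 𝒜 (e * rγ * g) :=
        ⟨0 + γ + 0, SetLike.mul_mem_graded (SetLike.mul_mem_graded he00 (SetLike.coe_mem _)) hg0⟩
      apply aux_semiprime 𝒜 hreg hv
      intro s
      have h1 : e * rγ * g * s * (e * rγ * g) = e * rγ * ((g * s * e) * (rγ * g)) := by
        noncomm_ring
      rw [h1, hgre s, zero_mul, mul_zero]
    have hg1 : g * 1 = 0 := stepA 1 (by rw [mul_one]; exact hIA g hgA)
    rw [mul_one] at hg1
    exact hgne hg1
  -- c is idempotent
  have hcc : c * c = c := by
    have hmem : c * c - c ∈ 𝒜 0 := by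
      have h := SetLike.mul_mem_graded hc0 hc0
      rw [add_zero] at h
      exact sub_mem h hc0
    have h := hann (c * c - c) ⟨0, hmem⟩ ?_
    · exact sub_eq_zero.mp h
    rintro u ⟨a, ha, b, hb, rfl⟩
    have h1 : c * (a + b) = a := by rw [mul_add, hca a ha, hcb b hb, add_zero]
    rw [sub_mul, mul_assoc, h1, hca a ha, sub_self]
  -- c is central
  have hcentralh : ∀ (γ : ι) (v : R), v ∈ 𝒜 γ → c * v = v * c := by
    intro γ v hv
    have hmem : c * v - v * c ∈ 𝒜 γ := by
      have h1 := SetLike.mul_mem_graded hc0 hv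
      have h2 := SetLike.mul_mem_graded hv hc0
      rw [zero_add] at h1
      rw [add_zero] at h2
      exact sub_mem h1 h2
    have h := hann (c * v - v * c) ⟨γ, hmem⟩ ?_
    · exact sub_eq_zero.mp h
    rintro u ⟨a, ha, b, hb, rfl⟩
    have h1 : c * (a + b) = a := by rw [mul_add, hca a ha, hcb b hb, add_zero]
    have h2 : c * (v * (a + b)) = v * a := by
      rw [mul_add v, mul_add c, hca _ (hAl a ha v), hcb _ (hBl b hb v), add_zero]
    calc (c * v - v * c) * (a + b) = c * (v * (a + b)) - v * (c * (a + b)) := by noncomm_ring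
      _ = v * a - v * a := by rw [h1, h2]
      _ = 0 := sub_self _
  have hcentral : ∀ v : R, c * v = v * c := by
    intro v
    conv_lhs => rw [← DirectSum.sum_support_decompose 𝒜 v]
    conv_rhs => rw [← DirectSum.sum_support_decompose 𝒜 v]
    rw [Finset.mul_sum, Finset.sum_mul]
    exact Finset.sum_congr rfl fun γ _ => hcentralh γ _ (SetLike.coe_mem _)
  have heB : e ∈ B := by
    have h := hBgen 1 1
    rwa [one_mul, mul_one] at h
  have hce : c * e = 0 := hcb e heB
  have hec : e * c = 0 := by rw [← hcentral e]; exact hce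
  have hczero : c = 0 := hf.2 c ⟨0, hc0⟩ hcc hcentral hec
  have hxA : x ∈ A := hcon
  have : x = 0 := by rw [← hca x hxA, hczero, zero_mul]
  exact hxne this
end Main

/-- Characterizations of graded faithful idempotents in a graded von
Neumann regular graded right self-injective ring: (a) `e` is graded faithful; (b) the
two-sided ideal `ReR` is graded essential as a right ideal; (c) `Re` is a graded
faithful left ideal (`xRe ≠ 0` for nonzero homogeneous `x`); (d) `eR` is a graded
faithful right ideal (`eRx ≠ 0` for nonzero homogeneous `x`); (e) for every nonzero
graded right ideal `J` there is a nonzero graded homomorphism `eR → J` of some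
degree `γ`. -/
theorem gradedFaithful_idempotent_tfae
    [DecidableEq ι] [AddCommGroup ι] [Ring R] (𝒜 : ι → AddSubgroup R) [GradedRing 𝒜]
    (hreg : GradedVNRegular 𝒜) (hinj : GradedSelfInjective 𝒜)
    (e : R) (he : IsHomogIdem 𝒜 e) :
    List.TFAE [
      GrFaithfulIdem 𝒜 e,
      GradedEssentialIn 𝒜
        ((AddSubgroup.closure {x : R | ∃ r s : R, x = r * e * s} : AddSubgroup R) : Set R)
        Set.univ,
      ∀ x : R, IsHomog 𝒜 x → x ≠ 0 → ∃ r : R, x * r * e ≠ 0,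
      ∀ x : R, IsHomog 𝒜 x → x ≠ 0 → ∃ r : R, e * r * x ≠ 0,
      ∀ J : Set R, IsGradedRightIdeal 𝒜 J → (∃ x ∈ J, x ≠ 0) →
        ∃ γ : ι, ∃ f : R → R,
          (∀ x : R, e * x = x → f x ∈ J) ∧
          (∀ x y : R, e * x = x → e * y = y → f (x + y) = f x + f y) ∧
          (∀ x : R, e * x = x → ∀ r : R, f (x * r) = f x * r) ∧
          (∀ δ : ι, ∀ x : R, e * x = x → x ∈ 𝒜 δ → f x ∈ 𝒜 (δ + γ)) ∧
          (∃ x : R, e * x = x ∧ f x ≠ 0) ] := by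
  classical
  open DirectSum in
  tfae_have 1 → 4 := fun h1 => key14 𝒜 hreg hinj h1
  tfae_have 4 → 3 := by
    intro h4 x hx hxne
    obtain ⟨δx, hδx⟩ := hx
    obtain ⟨r0, hr0⟩ := h4 x ⟨δx, hδx⟩ hxne
    have he0 : e ≠ 0 := by
      rintro rfl
      exact hr0 (by rw [zero_mul, zero_mul])
    have he00 : e ∈ 𝒜 0 := aux_idem_deg0 𝒜 he he0
    by_contra hc
    push_neg at hc
    obtain ⟨γ, hγ⟩ := aux_mid' 𝒜 hr0
    apply hγ
    set rγ : R := ((DirectSum.decompose 𝒜 r0 γ : 𝒜 γ) : R) with hrγ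
    have hv : IsHomog 𝒜 (e * rγ * x) :=
      ⟨0 + γ + δx, SetLike.mul_mem_graded (SetLike.mul_mem_graded he00 (SetLike.coe_mem _)) hδx⟩
    apply aux_semiprime 𝒜 hreg hv
    intro s
    have h1 : e * rγ * x * s * (e * rγ * x) = e * rγ * ((x * s * e) * (rγ * x)) := by
      noncomm_ring
    rw [h1, hc s, zero_mul, mul_zero]
  tfae_have 3 → 1 := by
    intro h3
    refine ⟨he, fun y hy hyy hyc hey => ?_⟩
    by_contra hyne
    obtain ⟨r, hr⟩ := h3 y hy hyne
    apply hr
    calc y * r * e = r * y * e := by rw [hyc r]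
      _ = r * (y * e) := by rw [mul_assoc]
      _ = r * (e * y) := by rw [hyc e]
      _ = 0 := by rw [hey, mul_zero]
  tfae_have 3 → 2 := by
    intro h3
    refine ⟨fun _ _ => trivial, ?_⟩
    rintro J hJ _ ⟨x', hx'J, hx'ne⟩
    have hcomp : ∃ γ : ι, ((DirectSum.decompose 𝒜 x' γ : 𝒜 γ) : R) ≠ 0 := by
      by_contra hcc
      push_neg at hcc
      exact hx'ne (aux_eq_zero 𝒜 hcc)
    obtain ⟨γ, hγ⟩ := hcomp
    set x : R := ((DirectSum.decompose 𝒜 x' γ : 𝒜 γ) : R) with hxdef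
    have hxJ : x ∈ J := hJ.2 x' hx'J γ
    obtain ⟨r, hr⟩ := h3 x ⟨γ, SetLike.coe_mem _⟩ hγ
    refine ⟨x * r * e, ⟨?_, ?_⟩, hr⟩
    · exact AddSubgroup.subset_closure ⟨x * r, 1, by rw [mul_one]⟩
    · have := hJ.1.2.2 x hxJ (r * e)
      rwa [← mul_assoc] at this
  tfae_have 2 → 1 := by
    intro h2
    refine ⟨he, fun y hy hyy hyc hey => ?_⟩
    by_contra hyne
    have hy0 : y ∈ 𝒜 0 := aux_idem_deg0 𝒜 ⟨hy, hyy⟩ hyne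
    set J : Set R := {u : R | ∃ r : R, u = y * r} with hJdef
    have hJgr : IsGradedRightIdeal 𝒜 J := by
      refine ⟨⟨⟨0, (mul_zero y).symm⟩, ?_, ?_⟩, ?_⟩
      · rintro u ⟨r, rfl⟩ v ⟨s, rfl⟩; exact ⟨r + s, (mul_add y r s).symm⟩
      · rintro u ⟨r, rfl⟩ t; exact ⟨r * t, mul_assoc y r t⟩
      · rintro u ⟨r, rfl⟩ γ
        exact ⟨((DirectSum.decompose 𝒜 r γ : 𝒜 γ) : R),
          (aux_decomp_mul_zero_left 𝒜 hy0 r γ)⟩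
    obtain ⟨z, ⟨hzB, hzJ⟩, hzne⟩ := h2.2 J hJgr (fun _ _ => trivial) ⟨y, ⟨1, (mul_one y).symm⟩, hyne⟩
    apply hzne
    have hyB : ∀ b ∈ (AddSubgroup.closure {x : R | ∃ r s : R, x = r * e * s} : AddSubgroup R),
        y * b = 0 := by
      intro b hb
      induction hb using AddSubgroup.closure_induction with
      | mem u hu =>
          obtain ⟨r, s, rfl⟩ := hu
          calc y * (r * e * s) = (y * r) * e * s := by noncomm_ring
            _ = (r * y) * e * s := by rw [hyc r]
            _ = r * (y * e) * s := by noncomm_ring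
            _ = r * (e * y) * s := by rw [hyc e]
            _ = 0 := by rw [hey, mul_zero, zero_mul]
      | zero => rw [mul_zero]
      | add u v _ _ hu hv => rw [mul_add, hu, hv, add_zero]
      | neg u _ hu => rw [mul_neg, hu, neg_zero]
    obtain ⟨r, rfl⟩ := hzJ
    calc y * r = y * (y * r) := by rw [← mul_assoc, hyy]
      _ = 0 := hyB _ hzB
  tfae_have 3 → 5 := by
    intro h3 J hJ hJne
    obtain ⟨x', hx'J, hx'ne⟩ := hJne
    have hcomp : ∃ δ0 : ι, ((DirectSum.decompose 𝒜 x' δ0 : 𝒜 δ0) : R) ≠ 0 := by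
      by_contra hcc
      push_neg at hcc
      exact hx'ne (aux_eq_zero 𝒜 hcc)
    obtain ⟨δ0, hδ0⟩ := hcomp
    set x : R := ((DirectSum.decompose 𝒜 x' δ0 : 𝒜 δ0) : R) with hxdef
    have hxJ : x ∈ J := hJ.2 x' hx'J δ0
    obtain ⟨r0, hr0⟩ := h3 x ⟨δ0, SetLike.coe_mem _⟩ hδ0
    obtain ⟨γ0, hγ0⟩ := aux_mid' 𝒜 hr0
    set r' : R := ((DirectSum.decompose 𝒜 r0 γ0 : 𝒜 γ0) : R) with hr'def
    refine ⟨δ0 + γ0, fun u => x * r' * u, ?_, ?_, ?_, ?_, ?_⟩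
    · intro u _
      show x * r' * u ∈ J
      have h := hJ.1.2.2 x hxJ (r' * u)
      rwa [← mul_assoc] at h
    · intro u v _ _
      show x * r' * (u + v) = x * r' * u + x * r' * v
      rw [mul_add]
    · intro u _ r
      show x * r' * (u * r) = x * r' * u * r
      rw [← mul_assoc]
    · intro δ u _ hu
      show x * r' * u ∈ 𝒜 (δ + (δ0 + γ0))
      have h := SetLike.mul_mem_graded
        (SetLike.mul_mem_graded (SetLike.coe_mem (DirectSum.decompose 𝒜 x' δ0)) (SetLike.coe_mem (DirectSum.decompose 𝒜 r0 γ0))) hu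
      rwa [show δ0 + γ0 + δ = δ + (δ0 + γ0) by abel] at h
    · refine ⟨e, he.2, ?_⟩
      exact hγ0
  tfae_have 5 → 3 := by
    intro h5 x hx hxne
    obtain ⟨δ, hδ⟩ := hx
    set J : Set R := {u : R | ∃ s : R, u = x * s} with hJdef
    have hJgr : IsGradedRightIdeal 𝒜 J := by
      refine ⟨⟨⟨0, (mul_zero x).symm⟩, ?_, ?_⟩, ?_⟩
      · rintro u ⟨r, rfl⟩ v ⟨s, rfl⟩; exact ⟨r + s, (mul_add x r s).symm⟩
      · rintro u ⟨r, rfl⟩ t; exact ⟨r * t, mul_assoc x r t⟩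
      · rintro u ⟨s, rfl⟩ γ
        have h := aux_decomp_mul_left 𝒜 hδ s (-δ + γ)
        rw [show δ + (-δ + γ) = γ by abel] at h
        exact ⟨_, h⟩
    obtain ⟨γ, f, hfJ, _, hflin, _, u, hu, hfu⟩ :=
      h5 J hJgr ⟨x, ⟨1, (mul_one x).symm⟩, hxne⟩
    have hfe : f u = f e * u := by
      have h := hflin e he.2 u
      rwa [hu] at h
    have hfene : f e ≠ 0 := by
      intro h0
      exact hfu (by rw [hfe, h0, zero_mul])
    obtain ⟨s, hs⟩ := hfJ e he.2
    refine ⟨s, ?_⟩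
    have h1 : f e = f e * e := by
      have h := hflin e he.2 e
      rwa [he.2] at h
    rw [show x * s * e = (x * s) * e from rfl, ← hs, ← h1]
    exact hfene
  tfae_finish
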